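/- For every real a > 0 and natural number m, (d/dc)^(m+1) evaluated at c = 0 of the function c ↦ √(a + √(1+c)) equals ((−1)^m m! / (π√2)) · ∫_0^∞ dx/(x⁴ + 2a x² + 1)^(m+1). -/

import Mathlib

open Real MeasureTheory

open Set Filter Metric

lemma DIR_poly_pos {a t : ℝ} (ha : 0 < a) (ht : 0 < t) (x : ℝ) :
    0 < x ^ 4 + 2 * a * x ^ 2 + t := by positivity

lemma DIR_integrableOn_q {a t : ℝ} (ha : 0 < a) (ht : 0 < t) (n : ℕ) :
    IntegrableOn (fun x : ℝ => ((x ^ 4 + 2 * a * x ^ 2 + t) ^ (n + 1))⁻¹) (Ioi 0) := by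
  have hcont : Continuous fun x : ℝ => ((x ^ 4 + 2 * a * x ^ 2 + t) ^ (n + 1))⁻¹ := by
    apply Continuous.inv₀ (by continuity)
    intro x; exact pow_ne_zero _ (DIR_poly_pos ha ht x).ne'
  rw [← Ioc_union_Ioi_eq_Ioi (zero_le_one (α := ℝ))]
  refine IntegrableOn.union ?_ ?_
  · exact (hcont.continuousOn.integrableOn_compact isCompact_Icc).mono_set Ioc_subset_Icc_self
  · refine (integrableOn_Ioi_rpow_of_lt (show (-2:ℝ) < -1 by norm_num) one_pos).mono'
      hcont.aestronglyMeasurable.restrict ?_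
    rw [ae_restrict_iff' measurableSet_Ioi]
    refine ae_of_all _ fun x hx => ?_
    have hx1 : (1:ℝ) < x := hx
    have hx0 : (0:ℝ) < x := lt_trans one_pos hx1
    have hb : (0:ℝ) < x ^ 4 + 2 * a * x ^ 2 + t := DIR_poly_pos ha ht x
    have h1 : x ^ 2 ≤ (x ^ 4 + 2 * a * x ^ 2 + t) ^ (n + 1) := by
      have hxx : (0:ℝ) ≤ 2 * a * x ^ 2 := by positivity
      have hx4 : (1:ℝ) ≤ x ^ 4 := one_le_pow₀ hx1.le
      have hx24 : x ^ 2 ≤ x ^ 4 := by nlinarith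
      have hb1 : (1:ℝ) ≤ x ^ 4 + 2 * a * x ^ 2 + t := by linarith
      calc x ^ 2 ≤ x ^ 4 + 2 * a * x ^ 2 + t := by linarith
        _ ≤ (x ^ 4 + 2 * a * x ^ 2 + t) ^ (n + 1) := le_self_pow₀ hb1 (Nat.succ_ne_zero n)
    have : x ^ (-2:ℝ) = (x ^ 2)⁻¹ := by
      rw [show (-2:ℝ) = -((2:ℕ):ℝ) by norm_num, Real.rpow_neg hx0.le, Real.rpow_natCast]
    rw [this, Real.norm_eq_abs, abs_of_nonneg (by positivity)]
    exact inv_anti₀ (by positivity) h1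

lemma DIR_gauss {k : ℝ} (hk : 0 < k) : ∫ y : ℝ, (y ^ 2 + k ^ 2)⁻¹ = π / k := by
  have h1 : ∀ y : ℝ, (y ^ 2 + k ^ 2)⁻¹ = (k ^ 2)⁻¹ * (1 + (k⁻¹ * y) ^ 2)⁻¹ := by
    intro y
    rw [mul_pow, ← mul_inv, inv_pow]
    congr 1
    field_simp
    ring
  simp_rw [h1]
  rw [integral_const_mul,
    MeasureTheory.Measure.integral_comp_mul_left (fun x => (1 + x ^ 2)⁻¹) k⁻¹,
    integral_univ_inv_one_add_sq, inv_inv, abs_of_pos hk, smul_eq_mul]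
  field_simp

lemma DIR_gauss_integrable {k : ℝ} (hk : 0 < k) :
    Integrable fun y : ℝ => (y ^ 2 + k ^ 2)⁻¹ := by
  have h := (integrable_inv_one_add_sq.comp_mul_left' (inv_ne_zero hk.ne')).const_mul (k ^ 2)⁻¹
  refine h.congr (ae_of_all _ fun y => ?_)
  simp only
  rw [mul_pow, ← mul_inv, inv_pow]
  congr 1
  field_simp
  ring

lemma DIR_integral_quartic {a s : ℝ} (ha : 0 < a) (hs : 0 < s) :
    ∫ x in Ioi (0:ℝ), (x ^ 4 + 2 * a * x ^ 2 + s ^ 2)⁻¹ =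
      π / (2 * Real.sqrt 2 * s * Real.sqrt (a + s)) := by
  set k : ℝ := Real.sqrt (2 * (a + s)) with hkdef
  have hk0 : 0 < k := Real.sqrt_pos.2 (by positivity)
  have hk2 : k ^ 2 = 2 * (a + s) := Real.sq_sqrt (by positivity)
  have hden : ∀ x : ℝ, 0 < (x - s / x) ^ 2 + k ^ 2 :=
    fun x => add_pos_of_nonneg_of_pos (sq_nonneg _) (pow_pos hk0 2)
  -- the substitution u = x - s/x
  have hu : ∀ x ∈ Ioi (0:ℝ), HasDerivWithinAt (fun x : ℝ => x - s / x)
      (1 + s / x ^ 2) (Ioi 0) x := by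
    intro x hx
    have hx0 : x ≠ 0 := ne_of_gt hx
    have h : HasDerivAt (fun x : ℝ => x - s * x⁻¹) (1 - s * -(x ^ 2)⁻¹) x :=
      (hasDerivAt_id' x).sub ((hasDerivAt_inv hx0).const_mul s)
    have h2 : HasDerivAt (fun x : ℝ => x - s / x) (1 + s / x ^ 2) x := by
      simp only [div_eq_mul_inv]
      convert h using 1
      ring
    exact h2.hasDerivWithinAt
  have hinj : InjOn (fun x : ℝ => x - s / x) (Ioi 0) := by
    intro x hx y hy hxy
    simp only [mem_Ioi] at hx hy
    have hx0 : x ≠ 0 := ne_of_gt hx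
    have hy0 : y ≠ 0 := ne_of_gt hy
    simp only at hxy
    have h : (x - y) * (x * y + s) = 0 := by
      field_simp at hxy
      nlinarith [hxy]
    rcases mul_eq_zero.1 h with h' | h'
    · linarith
    · nlinarith
  have himg : (fun x : ℝ => x - s / x) '' Ioi 0 = univ := by
    refine eq_univ_of_forall fun y => ?_
    have hr0 : (0:ℝ) ≤ y ^ 2 + 4 * s := by positivity
    have hr2 : Real.sqrt (y ^ 2 + 4 * s) ^ 2 = y ^ 2 + 4 * s := Real.sq_sqrt hr0
    have hr : |y| < Real.sqrt (y ^ 2 + 4 * s) := by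
      rw [← Real.sqrt_sq_eq_abs]
      exact Real.sqrt_lt_sqrt (sq_nonneg y) (by linarith)
    have hyabs : -y ≤ |y| := neg_le_abs y
    have hxpos : 0 < (y + Real.sqrt (y ^ 2 + 4 * s)) / 2 := by linarith
    refine ⟨(y + Real.sqrt (y ^ 2 + 4 * s)) / 2, mem_Ioi.2 hxpos, ?_⟩
    simp only
    rw [sub_eq_iff_eq_add]
    have hne : y + √(y ^ 2 + 4 * s) ≠ 0 := by
      intro h0
      rw [h0] at hxpos
      norm_num at hxpos
    field_simp
    nlinarith [hr2]
  -- value of I1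
  have key1 := integral_image_eq_integral_abs_deriv_smul measurableSet_Ioi hu hinj
    (fun y => (y ^ 2 + k ^ 2)⁻¹)
  rw [himg, MeasureTheory.setIntegral_univ, DIR_gauss hk0] at key1
  have hI1 : ∫ x in Ioi (0:ℝ), (1 + s / x ^ 2) * ((x - s / x) ^ 2 + k ^ 2)⁻¹ = π / k := by
    rw [key1]
    refine setIntegral_congr_fun measurableSet_Ioi fun x hx => ?_
    have hx0 : (0:ℝ) < x := hx
    rw [smul_eq_mul, abs_of_pos (by positivity)]
  -- integrability of h1
  have hint1 : IntegrableOn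
      (fun x : ℝ => (1 + s / x ^ 2) * ((x - s / x) ^ 2 + k ^ 2)⁻¹) (Ioi 0) := by
    have h := (integrableOn_image_iff_integrableOn_abs_deriv_smul measurableSet_Ioi hu hinj
      (fun y => (y ^ 2 + k ^ 2)⁻¹)).1 (by rw [himg]; exact (DIR_gauss_integrable hk0).integrableOn)
    refine h.congr_fun (fun x hx => ?_) measurableSet_Ioi
    have hx0 : (0:ℝ) < x := hx
    beta_reduce
    rw [smul_eq_mul, abs_of_pos (by positivity)]
  -- the substitution x ↦ s/x shows I2 = 0
  have hphi : ∀ x ∈ Ioi (0:ℝ), HasDerivWithinAt (fun x : ℝ => s / x)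
      (-(s / x ^ 2)) (Ioi 0) x := by
    intro x hx
    have hx0 : x ≠ 0 := ne_of_gt hx
    have h : HasDerivAt (fun x : ℝ => s * x⁻¹) (s * -(x ^ 2)⁻¹) x :=
      (hasDerivAt_inv hx0).const_mul s
    have h2 : HasDerivAt (fun x : ℝ => s / x) (-(s / x ^ 2)) x := by
      simp only [div_eq_mul_inv]
      convert h using 1
      ring
    exact h2.hasDerivWithinAt
  have hphiinj : InjOn (fun x : ℝ => s / x) (Ioi 0) := by
    intro x hx y hy hxy
    simp only [mem_Ioi] at hx hy
    simp only at hxy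
    field_simp at hxy
    exact hxy.symm
  have hphiimg : (fun x : ℝ => s / x) '' Ioi 0 = Ioi 0 := by
    apply Subset.antisymm
    · rintro y ⟨x, hx, rfl⟩
      simp only [mem_Ioi] at hx ⊢
      positivity
    · intro y hy
      simp only [mem_Ioi] at hy
      exact ⟨s / y, mem_Ioi.2 (by positivity), by field_simp⟩
  have key2 := integral_image_eq_integral_abs_deriv_smul measurableSet_Ioi hphi hphiinj
    (fun x => (1 - s / x ^ 2) * ((x - s / x) ^ 2 + k ^ 2)⁻¹)
  rw [hphiimg] at key2
  have hneg : EqOn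
      (fun x : ℝ => |(-(s / x ^ 2))| • ((1 - s / (s/x) ^ 2) * ((s/x - s / (s/x)) ^ 2 + k ^ 2)⁻¹))
      (fun x : ℝ => -((1 - s / x ^ 2) * ((x - s / x) ^ 2 + k ^ 2)⁻¹)) (Ioi 0) := by
    intro x hx
    have hx0 : (0:ℝ) < x := hx
    have e1 : s / (s / x) = x := by field_simp
    have e2 : s / (s / x) ^ 2 = x ^ 2 / s := by
      rw [div_pow]
      field_simp
    simp only
    rw [e1, e2, abs_neg, abs_of_pos (show (0:ℝ) < s / x ^ 2 by positivity), smul_eq_mul,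
      show (s/x - x) ^ 2 = (x - s/x) ^ 2 by ring]
    have hD : ((x - s / x) ^ 2 + k ^ 2) ≠ 0 := (hden x).ne'
    field_simp
    ring
  rw [setIntegral_congr_fun measurableSet_Ioi hneg, integral_neg] at key2
  have hI2 : ∫ x in Ioi (0:ℝ), (1 - s / x ^ 2) * ((x - s / x) ^ 2 + k ^ 2)⁻¹ = 0 := by
    linarith
  -- integrability of h2
  have hint2 : IntegrableOn
      (fun x : ℝ => (1 - s / x ^ 2) * ((x - s / x) ^ 2 + k ^ 2)⁻¹) (Ioi 0) := by
    refine hint1.mono' ?_ ?_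
    · refine (ContinuousOn.mul ?_ ?_).aestronglyMeasurable measurableSet_Ioi
      · exact continuousOn_const.sub (continuousOn_const.div (continuousOn_pow 2)
          fun x hx => pow_ne_zero 2 (ne_of_gt hx))
      · refine ContinuousOn.inv₀ ?_ fun x hx => (hden x).ne'
        exact ((continuousOn_id.sub (continuousOn_const.div continuousOn_id
          fun x hx => ne_of_gt hx)).pow 2).add continuousOn_const
    · rw [ae_restrict_iff' measurableSet_Ioi]
      refine ae_of_all _ fun x hx => ?_
      have hx0 : (0:ℝ) < x := hx
      have hq : (0:ℝ) ≤ s / x ^ 2 := by positivity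
      rw [Real.norm_eq_abs, abs_mul, abs_of_pos (inv_pos.2 (hden x))]
      have habs : |1 - s / x ^ 2| ≤ 1 + s / x ^ 2 := by
        rw [abs_le]; constructor <;> linarith
      exact mul_le_mul_of_nonneg_right habs (inv_nonneg.2 (hden x).le)
  -- pointwise decomposition
  have split : EqOn (fun x : ℝ => (x ^ 4 + 2 * a * x ^ 2 + s ^ 2)⁻¹)
      (fun x : ℝ => (1 / (2 * s)) * ((1 + s / x ^ 2) * ((x - s / x) ^ 2 + k ^ 2)⁻¹
        - (1 - s / x ^ 2) * ((x - s / x) ^ 2 + k ^ 2)⁻¹)) (Ioi 0) := by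
    intro x hx
    have hx0 : (0:ℝ) < x := hx
    have hD : ((x - s / x) ^ 2 + k ^ 2) ≠ 0 := (hden x).ne'
    have hP : (x ^ 4 + 2 * a * x ^ 2 + s ^ 2) ≠ 0 :=
      (DIR_poly_pos ha (by positivity) x).ne'
    simp only
    rw [hk2]
    have hD2 : (x - s / x) ^ 2 + 2 * (a + s) ≠ 0 := by positivity
    field_simp
    ring
  rw [setIntegral_congr_fun measurableSet_Ioi split, integral_const_mul,
    integral_sub hint1 hint2, hI1, hI2, sub_zero, hkdef,
    Real.sqrt_mul (by norm_num : (0:ℝ) ≤ 2)]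
  rw [div_mul_div_comm, one_mul]
  congr 1
  ring

lemma DIR_hasDerivAt_G {a : ℝ} (ha : 0 < a) (n : ℕ) {t : ℝ} (ht : 0 < t) :
    HasDerivAt (fun t : ℝ => ∫ x in Ioi (0:ℝ), ((x ^ 4 + 2 * a * x ^ 2 + t) ^ (n + 1))⁻¹)
      (-((n:ℝ) + 1) * ∫ x in Ioi (0:ℝ), ((x ^ 4 + 2 * a * x ^ 2 + t) ^ (n + 1 + 1))⁻¹) t := by
  have ht2 : 0 < t / 2 := half_pos ht
  have main := hasDerivAt_integral_of_dominated_loc_of_deriv_le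
    (μ := volume.restrict (Ioi (0:ℝ)))
    (F := fun t x => ((x ^ 4 + 2 * a * x ^ 2 + t) ^ (n + 1))⁻¹)
    (F' := fun t x => -(((n:ℝ) + 1) * ((x ^ 4 + 2 * a * x ^ 2 + t) ^ (n + 1 + 1))⁻¹))
    (x₀ := t) (s := Metric.ball t (t / 2))
    (bound := fun x => ((n:ℝ) + 1) * ((x ^ 4 + 2 * a * x ^ 2 + t / 2) ^ (n + 1 + 1))⁻¹)
    (Metric.ball_mem_nhds t ht2)
    (Eventually.of_forall fun t' => (Measurable.aestronglyMeasurable (by fun_prop)))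
    (DIR_integrableOn_q ha ht n)
    (Measurable.aestronglyMeasurable (by fun_prop))
    (ae_of_all _ fun x t' ht' => ?_)
    ((DIR_integrableOn_q ha ht2 (n + 1)).const_mul _)
    (ae_of_all _ fun x t' ht' => ?_)
  · have heq : (∫ x in Ioi (0:ℝ),
        -(((n:ℝ) + 1) * ((x ^ 4 + 2 * a * x ^ 2 + t) ^ (n + 1 + 1))⁻¹))
        = -((n:ℝ) + 1) * ∫ x in Ioi (0:ℝ), ((x ^ 4 + 2 * a * x ^ 2 + t) ^ (n + 1 + 1))⁻¹ := by
      rw [integral_neg, integral_const_mul]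
      ring
    rw [heq] at main
    exact main.2
  · -- bound
    have htlow : t / 2 < t' := by
      rw [mem_ball, Real.dist_eq, abs_lt] at ht'
      linarith
    have hb0 : 0 < x ^ 4 + 2 * a * x ^ 2 + t / 2 := DIR_poly_pos ha ht2 x
    have hb' : 0 < x ^ 4 + 2 * a * x ^ 2 + t' := by linarith
    rw [norm_neg, Real.norm_eq_abs, abs_of_nonneg (by positivity)]
    have hpow : (x ^ 4 + 2 * a * x ^ 2 + t / 2) ^ (n + 1 + 1)
        ≤ (x ^ 4 + 2 * a * x ^ 2 + t') ^ (n + 1 + 1) :=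
      pow_le_pow_left₀ hb0.le (by linarith) _
    exact mul_le_mul_of_nonneg_left (inv_anti₀ (pow_pos hb0 _) hpow) (by positivity)
  · -- differentiability
    have htlow : t / 2 < t' := by
      rw [mem_ball, Real.dist_eq, abs_lt] at ht'
      linarith
    have hb' : 0 < x ^ 4 + 2 * a * x ^ 2 + t' := by
      have := DIR_poly_pos ha ht2 x
      linarith
    have h1 : HasDerivAt (fun t' : ℝ => x ^ 4 + 2 * a * x ^ 2 + t') 1 t' :=
      (hasDerivAt_id' t').const_add (x ^ 4 + 2 * a * x ^ 2)
    have h2 := h1.pow (n + 1)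
    have h3 := h2.inv (pow_ne_zero _ hb'.ne')
    convert h3 using 1 <;> try rfl
    have hne : x ^ 4 + 2 * a * x ^ 2 + t' ≠ 0 := hb'.ne'
    try simp only [Nat.add_sub_cancel, mul_one, Pi.pow_apply]
    push_cast
    generalize x ^ 4 + 2 * a * x ^ 2 + t' = X at hne ⊢
    field_simp
    ring

lemma DIR_main {a : ℝ} (ha : 0 < a) (m : ℕ) : ∀ c ∈ Ioi (-1:ℝ),
    iteratedDeriv (m + 1) (fun c : ℝ => Real.sqrt (a + Real.sqrt (1 + c))) c =
      ((-1:ℝ) ^ m * m.factorial / (π * Real.sqrt 2)) *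
        ∫ x in Ioi (0:ℝ), ((x ^ 4 + 2 * a * x ^ 2 + (1 + c)) ^ (m + 1))⁻¹ := by
  induction m with
  | zero =>
    intro c hc
    have h1c : (0:ℝ) < 1 + c := by
      simp only [mem_Ioi] at hc
      linarith
    have hs0 : 0 < Real.sqrt (1 + c) := Real.sqrt_pos.2 h1c
    have has : 0 < a + Real.sqrt (1 + c) := by positivity
    have hq0 : 0 < Real.sqrt (a + Real.sqrt (1 + c)) := Real.sqrt_pos.2 has
    rw [iteratedDeriv_one]
    have hd : HasDerivAt (fun c : ℝ => Real.sqrt (a + Real.sqrt (1 + c)))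
        ((1 / (2 * Real.sqrt (1 + c))) / (2 * Real.sqrt (a + Real.sqrt (1 + c)))) c := by
      have hinner : HasDerivAt (fun c : ℝ => 1 + c) 1 c := (hasDerivAt_id' c).const_add 1
      exact ((hinner.sqrt h1c.ne').const_add a).sqrt has.ne'
    rw [hd.deriv]
    have hss : Real.sqrt (1 + c) ^ 2 = 1 + c := Real.sq_sqrt h1c.le
    simp only [pow_zero, Nat.factorial_zero, Nat.cast_one, one_mul, zero_add, pow_one]
    conv_rhs => rw [← hss]
    rw [DIR_integral_quartic ha hs0]
    have h2 : Real.sqrt 2 * Real.sqrt 2 = 2 := Real.mul_self_sqrt (by norm_num)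
    have h2' : (0:ℝ) < Real.sqrt 2 := Real.sqrt_pos.2 (by norm_num)
    have hπ : π ≠ 0 := Real.pi_ne_zero
    field_simp
    ring_nf
    linear_combination h2
  | succ m ih =>
    intro c hc
    have h1c : (0:ℝ) < 1 + c := by
      simp only [mem_Ioi] at hc
      linarith
    rw [iteratedDeriv_succ]
    have hev : iteratedDeriv (m + 1) (fun c : ℝ => Real.sqrt (a + Real.sqrt (1 + c)))
        =ᶠ[nhds c] fun c' : ℝ => ((-1:ℝ) ^ m * m.factorial / (π * Real.sqrt 2)) *
          ∫ x in Ioi (0:ℝ), ((x ^ 4 + 2 * a * x ^ 2 + (1 + c')) ^ (m + 1))⁻¹ := by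
      filter_upwards [isOpen_Ioi.mem_nhds hc] with c' hc' using ih c' hc'
    rw [hev.deriv_eq]
    have hG : HasDerivAt
        (fun c' : ℝ => ∫ x in Ioi (0:ℝ), ((x ^ 4 + 2 * a * x ^ 2 + (1 + c')) ^ (m + 1))⁻¹)
        (-((m:ℝ) + 1) * ∫ x in Ioi (0:ℝ),
          ((x ^ 4 + 2 * a * x ^ 2 + (1 + c)) ^ (m + 1 + 1))⁻¹) c := by
      have h0 := DIR_hasDerivAt_G ha m h1c
      have hcomp := h0.comp c ((hasDerivAt_id' c).const_add 1)
      simpa [Function.comp_def, mul_one] using hcomp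
    rw [(hG.const_mul _).deriv]
    push_cast [Nat.factorial_succ]
    ring

theorem derivative_integral_relation (a : ℝ) (ha : 0 < a) (m : ℕ) :
    iteratedDeriv (m + 1) (fun c : ℝ => Real.sqrt (a + Real.sqrt (1 + c))) 0 =
      ((-1 : ℝ) ^ m * m.factorial / (π * Real.sqrt 2)) *
        ∫ x in Set.Ioi (0 : ℝ), 1 / (x ^ 4 + 2 * a * x ^ 2 + 1) ^ (m + 1) := by
  have h := DIR_main ha m 0 (by norm_num)
  simp only [add_zero] at h
  simpa only [one_div] using h
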